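/- arXiv:math-ph/0403003 — 2 statements merged into one kernel-verified Lean document; each statement's English description precedes it below -/
import Mathlib

section
/- For probability measures μ₁, μ₂ on a separable Banach space B with finite p-moments, the weak p-Wasserstein distance defined by ⦀μ₁ − μ₂⦀ₚᵖ = sup over nonzero ℓ in the dual B* of inf over couplings μ_ℓ of μ₁ and μ₂ of ∫ |ℓ(x) − ℓ(y)|ᵖ / ‖ℓ‖ᵖ dμ_ℓ(x,y) satisfies: for every ℓ ∈ B*, the characteristic functions χ_μ(ℓ) = ∫ exp(i ℓ(x)) dμ(x) obey |χ_{μ₁}(ℓ) − χ_{μ₂}(ℓ)| ≤ ‖ℓ‖ · ⦀μ₁ − μ₂⦀ₚ. -/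
open MeasureTheory ENNReal

/-- The set of couplings of two measures. -/
def Couplings {B : Type*} [MeasurableSpace B] (μ₁ μ₂ : Measure B) : Set (Measure (B × B)) :=
  {π | π.map Prod.fst = μ₁ ∧ π.map Prod.snd = μ₂}

/-- The `p`-th power of the weak `p`-Wasserstein distance:
`⦀μ₁ − μ₂⦀ₚᵖ = sup_{ℓ ∈ B*, ℓ ≠ 0} inf_{couplings π} ∫ |ℓ x − ℓ y|ᵖ / ‖ℓ‖ᵖ dπ`. -/
noncomputable def weakWassPow {B : Type*} [NormedAddCommGroup B] [NormedSpace ℝ B]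
    [MeasurableSpace B] (p : ℝ) (μ₁ μ₂ : Measure B) : ℝ≥0∞ :=
  ⨆ ℓ : {ℓ : B →L[ℝ] ℝ // ℓ ≠ 0},
    ⨅ π : Couplings μ₁ μ₂,
      ∫⁻ z, ENNReal.ofReal (|ℓ.1 z.1 - ℓ.1 z.2| ^ p / ‖ℓ.1‖ ^ p) ∂π.1

/-- The weak `p`-Wasserstein distance `⦀μ₁ − μ₂⦀ₚ`. -/
noncomputable def weakWass {B : Type*} [NormedAddCommGroup B] [NormedSpace ℝ B]
    [MeasurableSpace B] (p : ℝ) (μ₁ μ₂ : Measure B) : ℝ≥0∞ :=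
  (weakWassPow p μ₁ μ₂) ^ (1 / p)

/-- The characteristic function of a measure `μ` on a Banach space at `ℓ ∈ B*`. -/
noncomputable def charFun {B : Type*} [NormedAddCommGroup B] [NormedSpace ℝ B]
    [MeasurableSpace B] (μ : Measure B) (ℓ : B →L[ℝ] ℝ) : ℂ :=
  ∫ x, Complex.exp (Complex.I * (ℓ x : ℂ)) ∂μ

lemma norm_exp_I_mul_sub_one_le (x : ℝ) : ‖Complex.exp (Complex.I * x) - 1‖ ≤ |x| := by
  have h : Complex.exp (Complex.I * x) - 1
      = (Real.cos x - 1 : ℝ) + (Real.sin x : ℝ) * Complex.I := by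
    rw [mul_comm, Complex.exp_mul_I]
    push_cast
    ring
  rw [h, Complex.norm_add_mul_I]
  have hcos := Real.one_sub_sq_div_two_le_cos (x := x)
  have hkey : (Real.cos x - 1) ^ 2 + Real.sin x ^ 2 ≤ x ^ 2 := by
    have hs := Real.sin_sq_add_cos_sq x
    nlinarith [Real.cos_le_one x, Real.neg_one_le_cos x, sq_nonneg x]
  calc √((Real.cos x - 1) ^ 2 + Real.sin x ^ 2) ≤ √(x ^ 2) := Real.sqrt_le_sqrt hkey
  _ = |x| := by rw [Real.sqrt_sq_eq_abs]

lemma norm_exp_I_sub_exp_I_le (a b : ℝ) :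
    ‖Complex.exp (Complex.I * a) - Complex.exp (Complex.I * b)‖ ≤ |a - b| := by
  have h : Complex.exp (Complex.I * a) - Complex.exp (Complex.I * b)
      = Complex.exp (Complex.I * b) * (Complex.exp (Complex.I * (a - b : ℝ)) - 1) := by
    rw [mul_sub, ← Complex.exp_add, mul_one]
    push_cast
    ring_nf
  rw [h, norm_mul]
  have h1 : ‖Complex.exp (Complex.I * b)‖ = 1 := by
    rw [mul_comm, Complex.norm_exp_ofReal_mul_I]
  rw [h1, one_mul]
  exact norm_exp_I_mul_sub_one_le _

lemma add_rpow_le_two_rpow_mul (a b p : ℝ) (ha : 0 ≤ a) (hb : 0 ≤ b) (hp : 0 ≤ p) :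
    (a + b) ^ p ≤ 2 ^ p * (a ^ p + b ^ p) := by
  have h1 : a + b ≤ 2 * max a b := by
    rcases max_cases a b with ⟨h, h'⟩ | ⟨h, h'⟩ <;> rw [h] <;> linarith
  calc (a + b) ^ p ≤ (2 * max a b) ^ p :=
        Real.rpow_le_rpow (by linarith) h1 hp
    _ = 2 ^ p * (max a b) ^ p := Real.mul_rpow (by norm_num) (le_max_of_le_left ha)
    _ ≤ 2 ^ p * (a ^ p + b ^ p) := by
        gcongr
        rcases max_cases a b with ⟨h, _⟩ | ⟨h, _⟩ <;> rw [h]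
        · nlinarith [Real.rpow_nonneg hb p]
        · nlinarith [Real.rpow_nonneg ha p]

/-- for probability measures with finite `p`-moments on a separable Banach
space, the characteristic functions satisfy
`|χ_{μ₁}(ℓ) − χ_{μ₂}(ℓ)| ≤ ‖ℓ‖ ⦀μ₁ − μ₂⦀ₚ`. -/
theorem charFun_dist_le_weakWass
    {B : Type*} [NormedAddCommGroup B] [NormedSpace ℝ B] [CompleteSpace B]
    [TopologicalSpace.SeparableSpace B] [MeasurableSpace B] [BorelSpace B]
    (p : ℝ) (hp : 1 ≤ p) (μ₁ μ₂ : Measure B)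
    [IsProbabilityMeasure μ₁] [IsProbabilityMeasure μ₂]
    (hmom₁ : ∫⁻ x, ENNReal.ofReal (‖x‖ ^ p) ∂μ₁ < ∞)
    (hmom₂ : ∫⁻ x, ENNReal.ofReal (‖x‖ ^ p) ∂μ₂ < ∞)
    (ℓ : B →L[ℝ] ℝ) :
    ‖charFun μ₁ ℓ - charFun μ₂ ℓ‖ ≤ ‖ℓ‖ * (weakWass p μ₁ μ₂).toReal := by
  rcases eq_or_ne ℓ 0 with rfl | hℓ0
  · have hone : ∀ μ : Measure B, IsProbabilityMeasure μ →
        charFun μ (0 : B →L[ℝ] ℝ) = 1 := by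
      intro μ hμ
      simp [_root_.charFun]
    rw [hone μ₁ ‹_›, hone μ₂ ‹_›]
    simp
  · have hp0 : (0 : ℝ) < p := lt_of_lt_of_le one_pos hp
    have hnℓ : (0 : ℝ) < ‖ℓ‖ := norm_pos_iff.mpr hℓ0
    have hprodmem : μ₁.prod μ₂ ∈ Couplings μ₁ μ₂ := by
      constructor
      · rw [Measure.map_fst_prod]; simp
      · rw [Measure.map_snd_prod]; simp
    haveI : Nonempty (Couplings μ₁ μ₂) := ⟨⟨_, hprodmem⟩⟩
    have hm1 : Measurable fun x : B => ENNReal.ofReal (‖x‖ ^ p) :=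
      (continuous_norm.rpow_const fun _ => Or.inr hp0.le).measurable.ennreal_ofReal
    -- finiteness of the weak Wasserstein distance
    have hWle : weakWassPow p μ₁ μ₂ ≤ ENNReal.ofReal (2 ^ p) *
        ((∫⁻ x, ENNReal.ofReal (‖x‖ ^ p) ∂μ₁) + ∫⁻ x, ENNReal.ofReal (‖x‖ ^ p) ∂μ₂) := by
      refine iSup_le ?_
      rintro ⟨ℓ', hℓ'⟩
      refine le_trans (iInf_le _ ⟨_, hprodmem⟩) ?_
      have hnℓ' : (0 : ℝ) < ‖ℓ'‖ := norm_pos_iff.mpr hℓ'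
      have hpt : ∀ z : B × B, ENNReal.ofReal (|ℓ' z.1 - ℓ' z.2| ^ p / ‖ℓ'‖ ^ p) ≤
          ENNReal.ofReal (2 ^ p) *
            (ENNReal.ofReal (‖z.1‖ ^ p) + ENNReal.ofReal (‖z.2‖ ^ p)) := by
        intro z
        have h1 : |ℓ' z.1 - ℓ' z.2| ≤ ‖ℓ'‖ * (‖z.1‖ + ‖z.2‖) := by
          calc |ℓ' z.1 - ℓ' z.2| ≤ |ℓ' z.1| + |ℓ' z.2| := by
                simpa [Real.norm_eq_abs] using norm_sub_le (ℓ' z.1) (ℓ' z.2)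
          _ ≤ ‖ℓ'‖ * ‖z.1‖ + ‖ℓ'‖ * ‖z.2‖ := by
                gcongr <;> simpa [Real.norm_eq_abs] using ℓ'.le_opNorm _
          _ = ‖ℓ'‖ * (‖z.1‖ + ‖z.2‖) := by ring
        have h2 : |ℓ' z.1 - ℓ' z.2| ^ p / ‖ℓ'‖ ^ p ≤ (‖z.1‖ + ‖z.2‖) ^ p := by
          rw [div_le_iff₀ (Real.rpow_pos_of_pos hnℓ' p),
            ← Real.mul_rpow (by positivity) (norm_nonneg _), mul_comm ((‖z.1‖ + ‖z.2‖)) (‖ℓ'‖)]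
          exact Real.rpow_le_rpow (abs_nonneg _) h1 hp0.le
        have h3 : (‖z.1‖ + ‖z.2‖) ^ p ≤ 2 ^ p * (‖z.1‖ ^ p + ‖z.2‖ ^ p) :=
          add_rpow_le_two_rpow_mul _ _ _ (norm_nonneg _) (norm_nonneg _) hp0.le
        calc ENNReal.ofReal (|ℓ' z.1 - ℓ' z.2| ^ p / ‖ℓ'‖ ^ p)
            ≤ ENNReal.ofReal (2 ^ p * (‖z.1‖ ^ p + ‖z.2‖ ^ p)) :=
              ENNReal.ofReal_le_ofReal (h2.trans h3)
          _ = ENNReal.ofReal (2 ^ p) *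
              (ENNReal.ofReal (‖z.1‖ ^ p) + ENNReal.ofReal (‖z.2‖ ^ p)) := by
              rw [ENNReal.ofReal_mul (by positivity),
                ENNReal.ofReal_add (by positivity) (by positivity)]
      calc (∫⁻ z, ENNReal.ofReal (|ℓ' z.1 - ℓ' z.2| ^ p / ‖ℓ'‖ ^ p) ∂(μ₁.prod μ₂))
          ≤ ∫⁻ z, ENNReal.ofReal (2 ^ p) *
              (ENNReal.ofReal (‖z.1‖ ^ p) + ENNReal.ofReal (‖z.2‖ ^ p)) ∂(μ₁.prod μ₂) :=
            lintegral_mono hpt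
        _ = ENNReal.ofReal (2 ^ p) *
              ((∫⁻ x, ENNReal.ofReal (‖x‖ ^ p) ∂μ₁) + ∫⁻ x, ENNReal.ofReal (‖x‖ ^ p) ∂μ₂) := by
            rw [lintegral_const_mul' _ _ ofReal_ne_top]
            congr 1
            rw [lintegral_add_left (f := fun z : B × B => ENNReal.ofReal (‖z.1‖ ^ p))
              (hm1.comp measurable_fst)]
            have e1 : (∫⁻ z : B × B, ENNReal.ofReal (‖z.1‖ ^ p) ∂(μ₁.prod μ₂))
                = ∫⁻ x, ENNReal.ofReal (‖x‖ ^ p) ∂μ₁ := by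
              rw [← lintegral_map hm1 measurable_fst, Measure.map_fst_prod, measure_univ,
                one_smul]
            have e2 : (∫⁻ z : B × B, ENNReal.ofReal (‖z.2‖ ^ p) ∂(μ₁.prod μ₂))
                = ∫⁻ x, ENNReal.ofReal (‖x‖ ^ p) ∂μ₂ := by
              rw [← lintegral_map hm1 measurable_snd, Measure.map_snd_prod, measure_univ,
                one_smul]
            rw [e1, e2]
    have hWfin : weakWassPow p μ₁ μ₂ ≠ ∞ :=
      ne_top_of_le_ne_top
        (ENNReal.mul_ne_top ofReal_ne_top (ENNReal.add_ne_top.mpr ⟨hmom₁.ne, hmom₂.ne⟩)) hWle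
    -- the key per-coupling estimate
    have key : ∀ π : Couplings μ₁ μ₂,
        ENNReal.ofReal ‖charFun μ₁ ℓ - charFun μ₂ ℓ‖ ≤ ENNReal.ofReal ‖ℓ‖ *
          (∫⁻ z, ENNReal.ofReal (|ℓ z.1 - ℓ z.2| ^ p / ‖ℓ‖ ^ p) ∂π.1) ^ (1 / p) := by
      rintro ⟨π, hπ1, hπ2⟩
      haveI : IsProbabilityMeasure π := by
        constructor
        have h := congrArg (fun m : Measure B => m Set.univ) hπ1
        simpa [Measure.map_apply measurable_fst MeasurableSet.univ] using h
      have hc1 : Continuous fun x : B => Complex.exp (Complex.I * (ℓ x : ℂ)) :=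
        Complex.continuous_exp.comp
          (continuous_const.mul (Complex.continuous_ofReal.comp ℓ.continuous))
      have hb : ∀ t : ℝ, ‖Complex.exp (Complex.I * (t : ℂ))‖ = 1 := fun t => by
        rw [mul_comm, Complex.norm_exp_ofReal_mul_I]
      have h1 : charFun μ₁ ℓ = ∫ z, Complex.exp (Complex.I * (ℓ z.1 : ℂ)) ∂π := by
        rw [_root_.charFun, ← hπ1,
          integral_map measurable_fst.aemeasurable hc1.aestronglyMeasurable]
      have h2 : charFun μ₂ ℓ = ∫ z, Complex.exp (Complex.I * (ℓ z.2 : ℂ)) ∂π := by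
        rw [_root_.charFun, ← hπ2,
          integral_map measurable_snd.aemeasurable hc1.aestronglyMeasurable]
      have hi1 : Integrable (fun z : B × B => Complex.exp (Complex.I * (ℓ z.1 : ℂ))) π :=
        (integrable_const (1 : ℝ)).mono'
          ((hc1.comp continuous_fst).aestronglyMeasurable)
          (Filter.Eventually.of_forall fun z => le_of_eq (hb _))
      have hi2 : Integrable (fun z : B × B => Complex.exp (Complex.I * (ℓ z.2 : ℂ))) π :=
        (integrable_const (1 : ℝ)).mono'
          ((hc1.comp continuous_snd).aestronglyMeasurable)
          (Filter.Eventually.of_forall fun z => le_of_eq (hb _))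
      have stepA : ENNReal.ofReal ‖charFun μ₁ ℓ - charFun μ₂ ℓ‖ ≤
          ∫⁻ z, ENNReal.ofReal |ℓ z.1 - ℓ z.2| ∂π := by
        rw [h1, h2, ← integral_sub hi1 hi2]
        calc ENNReal.ofReal ‖∫ z, (Complex.exp (Complex.I * (ℓ z.1 : ℂ)) -
                Complex.exp (Complex.I * (ℓ z.2 : ℂ))) ∂π‖
            = (‖∫ z, (Complex.exp (Complex.I * (ℓ z.1 : ℂ)) -
                Complex.exp (Complex.I * (ℓ z.2 : ℂ))) ∂π‖₊ : ℝ≥0∞) :=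
              ofReal_norm _
          _ ≤ ∫⁻ z, (‖Complex.exp (Complex.I * (ℓ z.1 : ℂ)) -
                Complex.exp (Complex.I * (ℓ z.2 : ℂ))‖₊ : ℝ≥0∞) ∂π :=
              enorm_integral_le_lintegral_enorm _
          _ ≤ ∫⁻ z, ENNReal.ofReal |ℓ z.1 - ℓ z.2| ∂π := by
              refine lintegral_mono fun z => ?_
              rw [← enorm_eq_nnnorm, ← ofReal_norm]
              exact ENNReal.ofReal_le_ofReal (norm_exp_I_sub_exp_I_le _ _)
      have hfm : AEStronglyMeasurable (fun z : B × B => |ℓ z.1 - ℓ z.2|) π :=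
        (((ℓ.continuous.comp continuous_fst).sub
          (ℓ.continuous.comp continuous_snd)).abs).aestronglyMeasurable
      have stepB : (∫⁻ z, ENNReal.ofReal |ℓ z.1 - ℓ z.2| ∂π) ≤
          (∫⁻ z, ENNReal.ofReal (|ℓ z.1 - ℓ z.2| ^ p) ∂π) ^ (1 / p) := by
        have hJ := eLpNorm_le_eLpNorm_of_exponent_le (μ := π)
          (p := 1) (q := ENNReal.ofReal p)
          (by simpa using ENNReal.ofReal_le_ofReal hp) hfm
        rw [eLpNorm_one_eq_lintegral_enorm,
          eLpNorm_eq_lintegral_rpow_enorm_toReal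
            (by simp [ENNReal.ofReal_eq_zero, not_le, hp0]) ofReal_ne_top,
          ENNReal.toReal_ofReal hp0.le] at hJ
        calc (∫⁻ z, ENNReal.ofReal |ℓ z.1 - ℓ z.2| ∂π)
            = ∫⁻ z : B × B, (‖|ℓ z.1 - ℓ z.2|‖₊ : ℝ≥0∞) ∂π := by
              refine lintegral_congr fun z => ?_
              rw [← enorm_eq_nnnorm, Real.enorm_eq_ofReal (abs_nonneg _)]
          _ ≤ (∫⁻ z : B × B, (‖|ℓ z.1 - ℓ z.2|‖₊ : ℝ≥0∞) ^ p ∂π) ^ (1 / p) := hJ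
          _ = (∫⁻ z, ENNReal.ofReal (|ℓ z.1 - ℓ z.2| ^ p) ∂π) ^ (1 / p) := by
              congr 1
              refine lintegral_congr fun z => ?_
              rw [← enorm_eq_nnnorm, Real.enorm_eq_ofReal (abs_nonneg _),
                ENNReal.ofReal_rpow_of_nonneg (abs_nonneg _) hp0.le]
      have stepC : (∫⁻ z, ENNReal.ofReal (|ℓ z.1 - ℓ z.2| ^ p) ∂π) ^ (1 / p) =
          ENNReal.ofReal ‖ℓ‖ *
            (∫⁻ z, ENNReal.ofReal (|ℓ z.1 - ℓ z.2| ^ p / ‖ℓ‖ ^ p) ∂π) ^ (1 / p) := by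
        have hne : (‖ℓ‖ : ℝ) ^ p ≠ 0 := (Real.rpow_pos_of_pos hnℓ p).ne'
        have e : ∀ z : B × B, ENNReal.ofReal (|ℓ z.1 - ℓ z.2| ^ p) =
            ENNReal.ofReal (‖ℓ‖ ^ p) * ENNReal.ofReal (|ℓ z.1 - ℓ z.2| ^ p / ‖ℓ‖ ^ p) := by
          intro z
          rw [← ENNReal.ofReal_mul (by positivity), mul_comm,
            div_mul_cancel₀ _ hne]
        rw [lintegral_congr e, lintegral_const_mul' _ _ ofReal_ne_top,
          ENNReal.mul_rpow_of_nonneg _ _ (by positivity : (0 : ℝ) ≤ 1 / p)]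
        congr 1
        rw [← ENNReal.ofReal_rpow_of_nonneg (norm_nonneg _) hp0.le, ← ENNReal.rpow_mul,
          mul_one_div_cancel hp0.ne', ENNReal.rpow_one]
      exact stepA.trans (stepB.trans_eq stepC)
    -- put everything together
    have h4 : ENNReal.ofReal ‖charFun μ₁ ℓ - charFun μ₂ ℓ‖ ≤
        ENNReal.ofReal ‖ℓ‖ *
          (⨅ π : Couplings μ₁ μ₂,
            ∫⁻ z, ENNReal.ofReal (|ℓ z.1 - ℓ z.2| ^ p / ‖ℓ‖ ^ p) ∂π.1) ^ (1 / p) := by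
      have hiso := (ENNReal.orderIsoRpow (1 / p) (by positivity)).map_iInf
        (fun π : Couplings μ₁ μ₂ =>
          ∫⁻ z, ENNReal.ofReal (|ℓ z.1 - ℓ z.2| ^ p / ‖ℓ‖ ^ p) ∂π.1)
      simp only [ENNReal.orderIsoRpow_apply] at hiso
      rw [hiso, ENNReal.mul_iInf_of_ne (ENNReal.ofReal_pos.mpr hnℓ).ne' ofReal_ne_top]
      exact le_iInf key
    have h5 : (⨅ π : Couplings μ₁ μ₂,
          ∫⁻ z, ENNReal.ofReal (|ℓ z.1 - ℓ z.2| ^ p / ‖ℓ‖ ^ p) ∂π.1)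
        ≤ weakWassPow p μ₁ μ₂ :=
      le_iSup (fun ℓ' : {ℓ : B →L[ℝ] ℝ // ℓ ≠ 0} =>
        ⨅ π : Couplings μ₁ μ₂,
          ∫⁻ z, ENNReal.ofReal (|ℓ'.1 z.1 - ℓ'.1 z.2| ^ p / ‖ℓ'.1‖ ^ p) ∂π.1) ⟨ℓ, hℓ0⟩
    have main : ENNReal.ofReal ‖charFun μ₁ ℓ - charFun μ₂ ℓ‖ ≤
        ENNReal.ofReal ‖ℓ‖ * weakWass p μ₁ μ₂ := by
      refine h4.trans ?_
      exact mul_le_mul_right (ENNReal.rpow_le_rpow h5 (by positivity)) _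
    have hfin : ENNReal.ofReal ‖ℓ‖ * weakWass p μ₁ μ₂ ≠ ∞ :=
      ENNReal.mul_ne_top ofReal_ne_top
        (ENNReal.rpow_lt_top_of_nonneg (by positivity) hWfin).ne
    have hfinal := ENNReal.toReal_mono hfin main
    rwa [ENNReal.toReal_ofReal (norm_nonneg _), ENNReal.toReal_mul,
      ENNReal.toReal_ofReal (norm_nonneg _)] at hfinal
end

section
/- For any two finite (signed) measures μ and ν and any measurable function f, one has |∫ f dμ − ∫ f dν| ≤ sqrt( ‖μ − ν‖_TV · ∫ f² d(μ + ν) ), where ‖·‖_TV denotes the total variation norm. -/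
open MeasureTheory

/-- Cauchy–Schwarz for the integral of `|f|` against a finite measure. -/
lemma my_cs {X : Type*} [MeasurableSpace X] (ρ : Measure X) [IsFiniteMeasure ρ]
    (f : X → ℝ) (hf : Integrable f ρ) (h2 : Integrable (fun x => f x ^ 2) ρ) :
    ∫ x, |f x| ∂ρ ≤ Real.sqrt ((ρ Set.univ).toReal * ∫ x, f x ^ 2 ∂ρ) := by
  set I := ∫ x, |f x| ∂ρ with hIdef
  set A := (ρ Set.univ).toReal with hAdef
  set B := ∫ x, f x ^ 2 ∂ρ with hBdef
  have hI : 0 ≤ I := integral_nonneg fun x => abs_nonneg _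
  have hA : 0 ≤ A := ENNReal.toReal_nonneg
  have hB : 0 ≤ B := integral_nonneg fun x => sq_nonneg _
  have hfabs : Integrable (fun x => |f x|) ρ := hf.abs
  have key : I ^ 2 ≤ A * B := by
    have h0 : ∀ t : ℝ, 0 ≤ A * (t * t) + (-2 * I) * t + B := by
      intro t
      have hnn : 0 ≤ ∫ x, (t - |f x|) ^ 2 ∂ρ := integral_nonneg fun x => sq_nonneg _
      have hexp : ∫ x, (t - |f x|) ^ 2 ∂ρ = A * (t * t) + (-2 * I) * t + B := by
        have : ∀ x, (t - |f x|) ^ 2 = t ^ 2 - 2 * t * |f x| + f x ^ 2 := fun x => by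
          rw [← sq_abs (f x)]; ring
        simp_rw [this]
        have hsub : Integrable (fun x => t ^ 2 - 2 * t * |f x|) ρ :=
          (integrable_const _).sub (hfabs.const_mul _)
        rw [integral_add hsub h2,
          integral_sub (integrable_const _) (hfabs.const_mul (2 * t)),
          integral_const, integral_const_mul]
        simp only [smul_eq_mul, Measure.real, ← hIdef, ← hAdef, ← hBdef]
        ring
      linarith [hexp ▸ hnn]
    have := discrim_le_zero h0
    rw [discrim] at this
    nlinarith
  have := Real.sqrt_le_sqrt key
  rwa [Real.sqrt_sq hI] at this

/-- for finite measures `μ, ν` and a measurable function `f` that is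
square-integrable with respect to `μ + ν`,
`|∫ f dμ − ∫ f dν| ≤ sqrt( ‖μ − ν‖_TV · ∫ f² d(μ+ν) )`,
where `‖μ − ν‖_TV` is the total variation norm of the signed measure `μ − ν`. -/
theorem abs_integral_sub_le_sqrt_tv
    {X : Type*} [MeasurableSpace X] (μ ν : Measure X)
    [IsFiniteMeasure μ] [IsFiniteMeasure ν]
    (f : X → ℝ) (hf : Measurable f)
    (hμ : Integrable f μ) (hν : Integrable f ν)
    (h2 : Integrable (fun x => f x ^ 2) (μ + ν)) :
    |∫ x, f x ∂μ - ∫ x, f x ∂ν| ≤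
      Real.sqrt (((μ.toSignedMeasure - ν.toSignedMeasure).totalVariation Set.univ).toReal
        * ∫ x, f x ^ 2 ∂(μ + ν)) := by
  obtain ⟨E, hE, hE1, hE2⟩ := hahn_decomposition (μ := μ) (ν := ν)
  set ρ₁ : Measure X := μ.restrict E - ν.restrict E with hρ₁
  set ρ₂ : Measure X := ν.restrict Eᶜ - μ.restrict Eᶜ with hρ₂
  have hle1 : ν.restrict E ≤ μ.restrict E := by
    refine Measure.le_iff.2 fun t ht => ?_
    rw [Measure.restrict_apply ht, Measure.restrict_apply ht]
    exact hE1 _ (ht.inter hE) Set.inter_subset_right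
  have hle2 : μ.restrict Eᶜ ≤ ν.restrict Eᶜ := by
    refine Measure.le_iff.2 fun t ht => ?_
    rw [Measure.restrict_apply ht, Measure.restrict_apply ht]
    exact hE2 _ (ht.inter hE.compl) Set.inter_subset_right
  have hρ₁le : ρ₁ ≤ μ := (Measure.sub_le).trans Measure.restrict_le_self
  have hρ₂le : ρ₂ ≤ ν := (Measure.sub_le).trans Measure.restrict_le_self
  haveI : IsFiniteMeasure ρ₁ := isFiniteMeasure_of_le μ hρ₁le
  haveI : IsFiniteMeasure ρ₂ := isFiniteMeasure_of_le ν hρ₂le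
  have hint1 : Integrable f ρ₁ := hμ.mono_measure hρ₁le
  have hint2 : Integrable f ρ₂ := hν.mono_measure hρ₂le
  -- the integral difference equals the difference of integrals over ρ₁, ρ₂
  have key1 : ∫ x, f x ∂μ - ∫ x, f x ∂ν = ∫ x, f x ∂ρ₁ - ∫ x, f x ∂ρ₂ := by
    have e1 : ρ₁ + ν.restrict E = μ.restrict E := Measure.sub_add_cancel_of_le hle1
    have e2 : ρ₂ + μ.restrict Eᶜ = ν.restrict Eᶜ := Measure.sub_add_cancel_of_le hle2
    have i1 : ∫ x, f x ∂(μ.restrict E) = ∫ x, f x ∂ρ₁ + ∫ x, f x ∂(ν.restrict E) := by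
      rw [← e1, integral_add_measure hint1 hν.restrict]
    have i2 : ∫ x, f x ∂(ν.restrict Eᶜ) = ∫ x, f x ∂ρ₂ + ∫ x, f x ∂(μ.restrict Eᶜ) := by
      rw [← e2, integral_add_measure hint2 hμ.restrict]
    have t1 := integral_add_compl hE hμ
    have t2 := integral_add_compl hE hν
    linarith
  set ρ : Measure X := ρ₁ + ρ₂ with hρ
  have hρle : ρ ≤ μ + ν := add_le_add hρ₁le hρ₂le
  haveI : IsFiniteMeasure ρ := isFiniteMeasure_of_le (μ + ν) hρle
  have hintρ : Integrable f ρ := hint1.add_measure hint2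
  have h2ρ : Integrable (fun x => f x ^ 2) ρ := h2.mono_measure hρle
  have step1 : |∫ x, f x ∂μ - ∫ x, f x ∂ν| ≤ ∫ x, |f x| ∂ρ := by
    rw [key1, hρ, integral_add_measure hint1.abs hint2.abs]
    have b1 : |∫ x, f x ∂ρ₁| ≤ ∫ x, |f x| ∂ρ₁ := by
      simpa [Real.norm_eq_abs] using norm_integral_le_integral_norm (μ := ρ₁) f
    have b2 : |∫ x, f x ∂ρ₂| ≤ ∫ x, |f x| ∂ρ₂ := by
      simpa [Real.norm_eq_abs] using norm_integral_le_integral_norm (μ := ρ₂) f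
    exact (abs_sub _ _).trans (add_le_add b1 b2)
  have step2 := my_cs ρ f hintρ h2ρ
  -- bound the mass of ρ by the total variation
  set sm : SignedMeasure X := μ.toSignedMeasure - ν.toSignedMeasure with hsm
  set J := sm.toJordanDecomposition with hJ
  have hTV : ((sm.totalVariation) Set.univ).toReal
      = (J.posPart Set.univ).toReal + (J.negPart Set.univ).toReal := by
    rw [SignedMeasure.totalVariation, Measure.add_apply,
      ENNReal.toReal_add (measure_ne_top _ _) (measure_ne_top _ _)]
  have hsE : sm E = (J.posPart E).toReal - (J.negPart E).toReal := by
    conv_lhs => rw [← sm.toSignedMeasure_toJordanDecomposition]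
    rw [JordanDecomposition.toSignedMeasure, Measure.toSignedMeasure_sub_apply hE]
    rfl
  have hsEc : sm Eᶜ = (J.posPart Eᶜ).toReal - (J.negPart Eᶜ).toReal := by
    conv_lhs => rw [← sm.toSignedMeasure_toJordanDecomposition]
    rw [JordanDecomposition.toSignedMeasure, Measure.toSignedMeasure_sub_apply hE.compl]
    rfl
  have hsE' : sm E = (μ E).toReal - (ν E).toReal := Measure.toSignedMeasure_sub_apply hE
  have hsEc' : sm Eᶜ = (μ Eᶜ).toReal - (ν Eᶜ).toReal :=
    Measure.toSignedMeasure_sub_apply hE.compl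
  have hρ₁u : (ρ₁ Set.univ).toReal = (μ E).toReal - (ν E).toReal := by
    rw [hρ₁, Measure.sub_apply MeasurableSet.univ hle1]
    simp only [Measure.restrict_apply_univ]
    rw [ENNReal.toReal_sub_of_le (hE1 E hE subset_rfl) (measure_ne_top _ _)]
  have hρ₂u : (ρ₂ Set.univ).toReal = (ν Eᶜ).toReal - (μ Eᶜ).toReal := by
    rw [hρ₂, Measure.sub_apply MeasurableSet.univ hle2]
    simp only [Measure.restrict_apply_univ]
    rw [ENNReal.toReal_sub_of_le (hE2 Eᶜ hE.compl subset_rfl) (measure_ne_top _ _)]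
  have hmono1 : (J.posPart E).toReal ≤ (J.posPart Set.univ).toReal :=
    ENNReal.toReal_mono (measure_ne_top _ _) (measure_mono (Set.subset_univ E))
  have hmono2 : (J.negPart Eᶜ).toReal ≤ (J.negPart Set.univ).toReal :=
    ENNReal.toReal_mono (measure_ne_top _ _) (measure_mono (Set.subset_univ Eᶜ))
  have hmass : (ρ Set.univ).toReal ≤ ((sm.totalVariation) Set.univ).toReal := by
    rw [hρ, Measure.add_apply,
      ENNReal.toReal_add (measure_ne_top _ _) (measure_ne_top _ _), hρ₁u, hρ₂u, hTV]
    have p1 : (0:ℝ) ≤ (J.negPart E).toReal := ENNReal.toReal_nonneg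
    have p2 : (0:ℝ) ≤ (J.posPart Eᶜ).toReal := ENNReal.toReal_nonneg
    nlinarith [hsE.symm.trans hsE', hsEc.symm.trans hsEc']
  have hintmono : ∫ x, f x ^ 2 ∂ρ ≤ ∫ x, f x ^ 2 ∂(μ + ν) :=
    integral_mono_measure hρle (Filter.Eventually.of_forall fun x => sq_nonneg _) h2
  refine step1.trans (step2.trans (Real.sqrt_le_sqrt ?_))
  exact mul_le_mul hmass hintmono (integral_nonneg fun x => sq_nonneg _) ENNReal.toReal_nonneg
end
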